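/- With notation as above, I_C(a_i) = H(t_V(i)) + W(t_V(i)) − W(t_V(i) + I_C(a_i)), where H(t)=V(t)−W(t). Symmetrically, letting s_W(j) be the first time W has taken j down-steps, I_C(b_j) = V(s_W(j)+I_C(b_j)) − V(s_W(j)) + H(s_W(j)). -/

import Mathlib

open scoped Classical

/-- A two-chain cover on `[n]`: a (strict) partial order on `Fin n` whose ground set is
partitioned into two chains, `A` and its complement `B = Aᶜ`. -/
structure TwoChainCover (n : ℕ) where
  lt : Fin n → Fin n → Prop
  irrefl : ∀ x, ¬lt x x
  trans : ∀ x y z, lt x y → lt y z → lt x z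
  A : Finset (Fin n)
  chainA : ∀ x ∈ A, ∀ y ∈ A, x ≠ y → lt x y ∨ lt y x
  chainB : ∀ x y : Fin n, x ∉ A → y ∉ A → x ≠ y → lt x y ∨ lt y x

namespace TwoChainCover

variable {n : ℕ}

/-- The incomparability graph of a two-chain cover: `x ∼ y` iff `x ≠ y` and `x, y` are
incomparable in the partial order. -/
def incompGraph (C : TwoChainCover n) : SimpleGraph (Fin n) where
  Adj x y := x ≠ y ∧ ¬C.lt x y ∧ ¬C.lt y x
  symm := by refine ⟨?_⟩; intro x y h; exact ⟨h.1.symm, h.2.2, h.2.1⟩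
  loopless := by refine ⟨?_⟩; intro x h; exact h.1 rfl

/-- A two-chain cover has one factor if its incomparability graph is connected. -/
def OneFactor (C : TwoChainCover n) : Prop := C.incompGraph.Connected

/-- `(λ, δ)` is the greedy pair of linear orders of the cover `C`: both are linear
extensions of the partial order (here given as equivs `Fin n ≃ Fin n`, where `λ i` is the
element in position `i`, so that `λ.symm` records ranks), and every incomparable pair
`a ∈ A`, `b ∈ B` is resolved as `a` before `b` in `λ` and `b` before `a` in `δ`. -/
def GreedyPair (C : TwoChainCover n) (lam del : Fin n ≃ Fin n) : Prop :=
  (∀ x y, C.lt x y → lam.symm x < lam.symm y) ∧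
  (∀ x y, C.lt x y → del.symm x < del.symm y) ∧
  (∀ a ∈ C.A, ∀ b : Fin n, b ∉ C.A → ¬C.lt a b → ¬C.lt b a →
    lam.symm a < lam.symm b ∧ del.symm b < del.symm a)

/-- The walk associated with a linear order `e` (so `Γ(C) = (walk C λ, walk C δ)`): at
step `i + 1` the walk goes up if the element in position `i` lies in the chain `A`, and
down otherwise. -/
def walk (C : TwoChainCover n) (e : Fin n ≃ Fin n) : ℕ → ℤ := fun t =>
  ∑ i ∈ Finset.univ.filter (fun i : Fin n => (i : ℕ) < t),
    (if e i ∈ C.A then (1 : ℤ) else -1)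

/-- The incomparability window of `c`: the number of elements incomparable to `c`. -/
noncomputable def window (C : TwoChainCover n) (c : Fin n) : ℕ :=
  (Finset.univ.filter fun y : Fin n => y ≠ c ∧ ¬C.lt y c ∧ ¬C.lt c y).card

/-- `τ(c)`: the number of elements `y ⪯ c`. -/
noncomputable def tau (C : TwoChainCover n) (c : Fin n) : ℕ :=
  (Finset.univ.filter fun y : Fin n => C.lt y c ∨ y = c).card

/-- The rank of `a` within the chain `A` (so `a = a_i` with `i = rankA C a`). -/
noncomputable def rankA (C : TwoChainCover n) (a : Fin n) : ℕ :=
  (Finset.univ.filter fun y : Fin n => y ∈ C.A ∧ C.lt y a).card + 1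

/-- The rank of `b` within the chain `B = Aᶜ` (so `b = b_j` with `j = rankB C b`). -/
noncomputable def rankB (C : TwoChainCover n) (b : Fin n) : ℕ :=
  (Finset.univ.filter fun y : Fin n => y ∉ C.A ∧ C.lt y b).card + 1

/-- The first time the walk associated with `e` has taken `i` up-steps. -/
noncomputable def tUp (C : TwoChainCover n) (e : Fin n ≃ Fin n) (i : ℕ) : ℕ :=
  sInf {t : ℕ | i ≤ (Finset.univ.filter fun j : Fin n => (j : ℕ) < t ∧ e j ∈ C.A).card}

/-- The first time the walk associated with `e` has taken `j` down-steps. -/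
noncomputable def tDown (C : TwoChainCover n) (e : Fin n ≃ Fin n) (j : ℕ) : ℕ :=
  sInf {t : ℕ | j ≤ (Finset.univ.filter fun i : Fin n => (i : ℕ) < t ∧ e i ∉ C.A).card}

end TwoChainCover

namespace TwoChainCoverAux

open Finset

variable {n : ℕ}

lemma card_filter_symm_lt (e : Fin n ≃ Fin n) (c : Fin n) :
    (univ.filter fun y : Fin n => (e.symm y : ℕ) < (e.symm c : ℕ)).card = (e.symm c : ℕ) := by
  have h1 : (univ.filter fun y : Fin n => (e.symm y : ℕ) < (e.symm c : ℕ)).card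
      = (univ.filter fun j : Fin n => (j : ℕ) < (e.symm c : ℕ)).card :=
    Finset.card_equiv e.symm (by simp)
  rw [h1]
  have h2 : (Finset.univ.filter fun j : Fin n => (j:ℕ) < (e.symm c : ℕ))
      = Finset.Iio (e.symm c) := by
    ext j
    simp only [Finset.mem_filter, Finset.mem_univ, true_and, Finset.mem_Iio, Fin.lt_def]
  rw [h2, Fin.card_Iio]

lemma count_reindex (e : Fin n ≃ Fin n) (t : ℕ) (P : Fin n → Prop) [DecidablePred P] :
    (univ.filter fun j : Fin n => (j:ℕ) < t ∧ P (e j)).card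
      = (univ.filter fun y : Fin n => (e.symm y : ℕ) < t ∧ P y).card :=
  Finset.card_equiv e (by simp)

lemma card_split (p : Fin n → Prop) [DecidablePred p] (A : Finset (Fin n)) :
    (univ.filter p).card = (univ.filter fun y => p y ∧ y ∈ A).card +
      (univ.filter fun y => p y ∧ y ∉ A).card := by
  classical
  rw [← Finset.card_filter_add_card_filter_not
    (s := univ.filter p) (p := fun y => y ∈ A), Finset.filter_filter, Finset.filter_filter]

lemma walk_eq (C : TwoChainCover n) (e : Fin n ≃ Fin n) (t : ℕ) :
    C.walk e t = ((univ.filter fun y : Fin n => (e.symm y:ℕ) < t ∧ y ∈ C.A).card : ℤ)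
      - ((univ.filter fun y : Fin n => (e.symm y:ℕ) < t ∧ y ∉ C.A).card : ℤ) := by
  classical
  unfold TwoChainCover.walk
  rw [Finset.sum_ite, Finset.filter_filter, Finset.filter_filter,
    Finset.sum_const, Finset.sum_const]
  rw [count_reindex e t (fun y => y ∈ C.A), count_reindex e t (fun y => y ∉ C.A)]
  ring

lemma main_lemma (C : TwoChainCover n) (lam del : Fin n ≃ Fin n) (hg : C.GreedyPair lam del)
    (a : Fin n) (ha : a ∈ C.A) :
    (C.window a : ℤ) = C.walk lam (C.tUp lam (C.rankA a)) -
      C.walk del (C.tUp lam (C.rankA a) + C.window a) := by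
  classical
  obtain ⟨hg1', hg2', hg3'⟩ := hg
  have hg1 : ∀ x y, C.lt x y → (lam.symm x : ℕ) < (lam.symm y : ℕ) :=
    fun x y h => Fin.lt_def.mp (hg1' x y h)
  have hg2 : ∀ x y, C.lt x y → (del.symm x : ℕ) < (del.symm y : ℕ) :=
    fun x y h => Fin.lt_def.mp (hg2' x y h)
  have hg3 : ∀ a ∈ C.A, ∀ b : Fin n, b ∉ C.A → ¬C.lt a b → ¬C.lt b a →
      (lam.symm a : ℕ) < (lam.symm b : ℕ) ∧ (del.symm b : ℕ) < (del.symm a : ℕ) :=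
    fun a ha b hb h1 h2 =>
      ⟨Fin.lt_def.mp (hg3' a ha b hb h1 h2).1, Fin.lt_def.mp (hg3' a ha b hb h1 h2).2⟩
  -- every element incomparable to a is outside A
  have hq_notA : ∀ y, y ≠ a → ¬C.lt y a → ¬C.lt a y → y ∉ C.A := by
    intro y hne h1 h2 hy
    rcases C.chainA a ha y hy (Ne.symm hne) with h | h
    · exact h2 h
    · exact h1 h
  set k : ℕ := (lam.symm a : ℕ) with hkdef
  set t : ℕ := k + 1 with htdef
  -- position characterizations
  have hlam : ∀ y : Fin n, ((lam.symm y : ℕ) < k) ↔ C.lt y a := by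
    intro y
    constructor
    · intro h
      by_contra hcon
      have hne : y ≠ a := by
        rintro rfl; exact lt_irrefl _ h
      have h2 : ¬C.lt a y := by
        intro h2
        have := hg1 a y h2
        omega
      by_cases hy : y ∈ C.A
      · rcases C.chainA a ha y hy (Ne.symm hne) with h' | h'
        · exact h2 h'
        · exact hcon h'
      · have := (hg3 a ha y hy h2 hcon).1
        omega
    · intro h; exact hg1 y a h
  have hlam_le : ∀ y : Fin n, ((lam.symm y : ℕ) < t) ↔ (C.lt y a ∨ y = a) := by
    intro y
    rw [htdef]
    constructor
    · intro h
      rcases Nat.lt_or_ge (lam.symm y : ℕ) k with h' | h'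
      · exact Or.inl ((hlam y).1 h')
      · right
        have hv : (lam.symm y : ℕ) = k := by omega
        exact lam.symm.injective (Fin.ext hv)
    · rintro (h | rfl)
      · have := (hlam y).2 h; omega
      · omega
  have hdel : ∀ y : Fin n, ((del.symm y : ℕ) < (del.symm a : ℕ)) ↔
      (C.lt y a ∨ (y ≠ a ∧ ¬C.lt y a ∧ ¬C.lt a y)) := by
    intro y
    constructor
    · intro h
      by_cases hlt : C.lt y a
      · exact Or.inl hlt
      right
      have hne : y ≠ a := by
        rintro rfl; exact lt_irrefl _ h
      have h2 : ¬C.lt a y := by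
        intro h2
        have := hg2 a y h2
        omega
      exact ⟨hne, hlt, h2⟩
    · rintro (h | ⟨hne, h1, h2⟩)
      · exact hg2 y a h
      · have hy : y ∉ C.A := hq_notA y hne h1 h2
        exact (hg3 a ha y hy h2 h1).2
  set iA : ℕ := (univ.filter fun y : Fin n => C.lt y a ∧ y ∈ C.A).card with hiAdef
  set d : ℕ := (univ.filter fun y : Fin n => C.lt y a ∧ y ∉ C.A).card with hddef
  set I : ℕ := C.window a with hIdef
  have hltcard : (univ.filter fun y : Fin n => C.lt y a).card = iA + d := by
    rw [hiAdef, hddef]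
    exact card_split (fun y => C.lt y a) C.A
  -- k = iA + d
  have hk : k = iA + d := by
    have h1 := card_filter_symm_lt lam a
    have h2 : (univ.filter fun y : Fin n => (lam.symm y : ℕ) < k)
        = (univ.filter fun y : Fin n => C.lt y a) := by
      ext y
      simp only [Finset.mem_filter, Finset.mem_univ, true_and, hlam y]
    rw [h2, hltcard] at h1
    omega
  -- rankA a = iA + 1
  have hrank : C.rankA a = iA + 1 := by
    unfold TwoChainCover.rankA
    congr 1
    rw [hiAdef]
    congr 1
    ext y
    simp only [Finset.mem_filter, Finset.mem_univ, true_and]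
    tauto
  have hsetUp : (univ.filter fun y : Fin n => (lam.symm y : ℕ) < t ∧ y ∈ C.A)
      = insert a (univ.filter fun y : Fin n => C.lt y a ∧ y ∈ C.A) := by
    ext y
    simp only [Finset.mem_filter, Finset.mem_univ, true_and, Finset.mem_insert, hlam_le y]
    constructor
    · rintro ⟨h | rfl, hA⟩
      · exact Or.inr ⟨h, hA⟩
      · exact Or.inl rfl
    · rintro (rfl | ⟨h, hA⟩)
      · exact ⟨Or.inr rfl, ha⟩
      · exact ⟨Or.inl h, hA⟩
  have ha_not_mem : a ∉ (univ.filter fun y : Fin n => C.lt y a ∧ y ∈ C.A) := by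
    simp only [Finset.mem_filter, Finset.mem_univ, true_and, not_and]
    intro h; exact absurd h (C.irrefl a)
  have cUp_lam : (univ.filter fun y : Fin n => (lam.symm y : ℕ) < t ∧ y ∈ C.A).card
      = iA + 1 := by
    rw [hsetUp, Finset.card_insert_of_notMem ha_not_mem, hiAdef]
  have cDown_lam : (univ.filter fun y : Fin n => (lam.symm y : ℕ) < t ∧ y ∉ C.A).card
      = d := by
    rw [hddef]
    congr 1
    ext y
    simp only [Finset.mem_filter, Finset.mem_univ, true_and, hlam_le y]
    constructor
    · rintro ⟨h | rfl, hA⟩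
      · exact ⟨h, hA⟩
      · exact absurd ha hA
    · rintro ⟨h, hA⟩
      exact ⟨Or.inl h, hA⟩
  have cUp_lam_k : (univ.filter fun y : Fin n => (lam.symm y : ℕ) < k ∧ y ∈ C.A).card
      = iA := by
    rw [hiAdef]
    congr 1
    ext y
    simp only [Finset.mem_filter, Finset.mem_univ, true_and, hlam y]
  -- tUp lam (rankA a) = t
  have htUp : C.tUp lam (C.rankA a) = t := by
    unfold TwoChainCover.tUp
    have hmemt : t ∈ {s : ℕ | C.rankA a ≤
        (univ.filter fun j : Fin n => (j : ℕ) < s ∧ lam j ∈ C.A).card} := by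
      show C.rankA a ≤ _
      rw [count_reindex lam t (fun y => y ∈ C.A), cUp_lam, hrank]
    apply le_antisymm (Nat.sInf_le hmemt)
    by_contra hcon
    push_neg at hcon
    have hmem := Nat.sInf_mem (Set.nonempty_of_mem hmemt)
    set m := sInf {s : ℕ | C.rankA a ≤
        (univ.filter fun j : Fin n => (j : ℕ) < s ∧ lam j ∈ C.A).card} with hm
    have hmk : m ≤ k := by omega
    have hle : (univ.filter fun j : Fin n => (j : ℕ) < m ∧ lam j ∈ C.A).card
        ≤ (univ.filter fun y : Fin n => (lam.symm y : ℕ) < k ∧ y ∈ C.A).card := by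
      rw [← count_reindex lam k (fun y => y ∈ C.A)]
      apply Finset.card_le_card
      intro x hx
      simp only [Finset.mem_filter, Finset.mem_univ, true_and] at hx ⊢
      exact ⟨lt_of_lt_of_le hx.1 hmk, hx.2⟩
    have hmm : C.rankA a ≤
        (univ.filter fun j : Fin n => (j : ℕ) < m ∧ lam j ∈ C.A).card := hmem
    rw [cUp_lam_k] at hle
    rw [hrank] at hmm
    omega
  -- position of a in del
  have hdelval : (del.symm a : ℕ) = iA + d + I := by
    have h1 := card_filter_symm_lt del a
    have h2 : (univ.filter fun y : Fin n => (del.symm y : ℕ) < (del.symm a : ℕ))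
        = (univ.filter fun y : Fin n => C.lt y a) ∪
          (univ.filter fun y : Fin n => y ≠ a ∧ ¬C.lt y a ∧ ¬C.lt a y) := by
      ext y
      simp only [Finset.mem_filter, Finset.mem_union, Finset.mem_univ, true_and, hdel y]
    have hdisj : Disjoint (univ.filter fun y : Fin n => C.lt y a)
        (univ.filter fun y : Fin n => y ≠ a ∧ ¬C.lt y a ∧ ¬C.lt a y) := by
      rw [Finset.disjoint_left]
      intro x hx hx'
      simp only [Finset.mem_filter, Finset.mem_univ, true_and] at hx hx'
      exact hx'.2.1 hx
    have hIcard : (univ.filter fun y : Fin n => y ≠ a ∧ ¬C.lt y a ∧ ¬C.lt a y).card = I := by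
      rw [hIdef]
      unfold TwoChainCover.window
      congr 1
    rw [h2, Finset.card_union_of_disjoint hdisj, hltcard, hIcard] at h1
    omega
  have hdel_le : ∀ y : Fin n, ((del.symm y : ℕ) < t + I) ↔
      (C.lt y a ∨ (y ≠ a ∧ ¬C.lt y a ∧ ¬C.lt a y) ∨ y = a) := by
    intro y
    have htI : t + I = (del.symm a : ℕ) + 1 := by omega
    rw [htI]
    constructor
    · intro h
      rcases Nat.lt_or_ge (del.symm y : ℕ) (del.symm a : ℕ) with h' | h'
      · rcases (hdel y).1 h' with h'' | h''
        · exact Or.inl h''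
        · exact Or.inr (Or.inl h'')
      · right; right
        have hv : (del.symm y : ℕ) = (del.symm a : ℕ) := by omega
        exact del.symm.injective (Fin.ext hv)
    · rintro (h | h | rfl)
      · have := (hdel y).2 (Or.inl h); omega
      · have := (hdel y).2 (Or.inr h); omega
      · omega
  have cUp_del : (univ.filter fun y : Fin n => (del.symm y : ℕ) < t + I ∧ y ∈ C.A).card
      = iA + 1 := by
    have hset : (univ.filter fun y : Fin n => (del.symm y : ℕ) < t + I ∧ y ∈ C.A)
        = insert a (univ.filter fun y : Fin n => C.lt y a ∧ y ∈ C.A) := by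
      ext y
      simp only [Finset.mem_filter, Finset.mem_univ, true_and, Finset.mem_insert, hdel_le y]
      constructor
      · rintro ⟨h | h | rfl, hA⟩
        · exact Or.inr ⟨h, hA⟩
        · exact absurd hA (hq_notA y h.1 h.2.1 h.2.2)
        · exact Or.inl rfl
      · rintro (rfl | ⟨h, hA⟩)
        · exact ⟨Or.inr (Or.inr rfl), ha⟩
        · exact ⟨Or.inl h, hA⟩
    rw [hset, Finset.card_insert_of_notMem ha_not_mem, hiAdef]
  have cDown_del : (univ.filter fun y : Fin n => (del.symm y : ℕ) < t + I ∧ y ∉ C.A).card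
      = d + I := by
    have hset : (univ.filter fun y : Fin n => (del.symm y : ℕ) < t + I ∧ y ∉ C.A)
        = (univ.filter fun y : Fin n => C.lt y a ∧ y ∉ C.A) ∪
          (univ.filter fun y : Fin n => y ≠ a ∧ ¬C.lt y a ∧ ¬C.lt a y) := by
      ext y
      simp only [Finset.mem_filter, Finset.mem_union, Finset.mem_univ, true_and, hdel_le y]
      constructor
      · rintro ⟨h | h | rfl, hA⟩
        · exact Or.inl ⟨h, hA⟩
        · exact Or.inr h
        · exact absurd ha hA
      · rintro (⟨h, hA⟩ | h)
        · exact ⟨Or.inl h, hA⟩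
        · exact ⟨Or.inr (Or.inl h), hq_notA y h.1 h.2.1 h.2.2⟩
    have hdisj : Disjoint (univ.filter fun y : Fin n => C.lt y a ∧ y ∉ C.A)
        (univ.filter fun y : Fin n => y ≠ a ∧ ¬C.lt y a ∧ ¬C.lt a y) := by
      rw [Finset.disjoint_left]
      intro x hx hx'
      simp only [Finset.mem_filter, Finset.mem_univ, true_and] at hx hx'
      exact hx'.2.1 hx.1
    have hIcard : (univ.filter fun y : Fin n => y ≠ a ∧ ¬C.lt y a ∧ ¬C.lt a y).card = I := by
      rw [hIdef]
      unfold TwoChainCover.window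
      congr 1
    rw [hset, Finset.card_union_of_disjoint hdisj, hIcard, ← hddef]
  rw [htUp, walk_eq C lam t, walk_eq C del (t + I), cUp_lam, cDown_lam, cUp_del, cDown_del]
  push_cast
  ring



/-- Swap the roles of the two chains. -/
def cflip (C : TwoChainCover n) : TwoChainCover n where
  lt := C.lt
  irrefl := C.irrefl
  trans := C.trans
  A := C.Aᶜ
  chainA := fun x hx y hy => C.chainB x y (by simpa using hx) (by simpa using hy)
  chainB := fun x y hx hy => C.chainA x (by simpa using hx) y (by simpa using hy)

lemma cflip_walk (C : TwoChainCover n) (e : Fin n ≃ Fin n) (t : ℕ) :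
    (cflip C).walk e t = - C.walk e t := by
  unfold TwoChainCover.walk
  rw [← Finset.sum_neg_distrib]
  apply Finset.sum_congr rfl
  intro i _
  by_cases h : e i ∈ C.A <;> simp [cflip, h]

lemma cflip_window (C : TwoChainCover n) (c : Fin n) :
    (cflip C).window c = C.window c := rfl

lemma cflip_rankA (C : TwoChainCover n) (b : Fin n) :
    (cflip C).rankA b = C.rankB b := by
  unfold TwoChainCover.rankA TwoChainCover.rankB
  congr 1
  congr 1
  ext y
  simp [cflip]

lemma cflip_tUp (C : TwoChainCover n) (e : Fin n ≃ Fin n) (j : ℕ) :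
    (cflip C).tUp e j = C.tDown e j := by
  unfold TwoChainCover.tUp TwoChainCover.tDown
  have hc : ∀ s : ℕ, (univ.filter fun i : Fin n => (i : ℕ) < s ∧ e i ∈ (cflip C).A).card
      = (univ.filter fun i : Fin n => (i : ℕ) < s ∧ e i ∉ C.A).card := by
    intro s
    congr 1
    ext i
    simp [cflip]
  congr 1
  ext s
  simp only [Set.mem_setOf_eq, hc s]


end TwoChainCoverAux

open TwoChainCover in
/-- With `C = (A, B, ≺)` a one-factor two-chain cover, greedy pair `(λ, δ)`, associated
walks `(V, W)` and height `H(t) = V t - W t`: for `a = a_i` the `i`-th element of `A`,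
`I_C(a_i) = H(t_V(i)) + W(t_V(i)) - W(t_V(i) + I_C(a_i))`; and symmetrically for
`b = b_j` the `j`-th element of `B`, with `s_W(j)` the first time `W` has taken `j`
down-steps, `I_C(b_j) = V(s_W(j) + I_C(b_j)) - V(s_W(j)) + H(s_W(j))`. -/
theorem window_height_identities (n : ℕ) (C : TwoChainCover n)
    (lam del : Fin n ≃ Fin n) (h1 : C.OneFactor) (hg : C.GreedyPair lam del) :
    (∀ a ∈ C.A,
      (C.window a : ℤ) =
        (C.walk lam (C.tUp lam (C.rankA a)) - C.walk del (C.tUp lam (C.rankA a))) +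
          C.walk del (C.tUp lam (C.rankA a)) -
          C.walk del (C.tUp lam (C.rankA a) + C.window a)) ∧
    (∀ b : Fin n, b ∉ C.A →
      (C.window b : ℤ) =
        C.walk lam (C.tDown del (C.rankB b) + C.window b) -
          C.walk lam (C.tDown del (C.rankB b)) +
          (C.walk lam (C.tDown del (C.rankB b)) - C.walk del (C.tDown del (C.rankB b)))) := by
  constructor
  · intro a ha
    have h := TwoChainCoverAux.main_lemma C lam del hg a ha
    linarith
  · intro b hb
    have hb' : b ∈ (TwoChainCoverAux.cflip C).A := by
      simp only [TwoChainCoverAux.cflip, Finset.mem_compl]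
      exact hb
    have hg' : (TwoChainCoverAux.cflip C).GreedyPair del lam := by
      obtain ⟨hg1, hg2, hg3⟩ := hg
      refine ⟨hg2, hg1, fun a' ha' b' hb'' hab hba => ?_⟩
      have ha'2 : a' ∉ C.A := by
        simpa only [TwoChainCoverAux.cflip, Finset.mem_compl] using ha'
      have hb'2 : b' ∈ C.A := by
        simpa only [TwoChainCoverAux.cflip, Finset.mem_compl, not_not] using hb''
      have := hg3 b' hb'2 a' ha'2 hba hab
      exact ⟨this.2, this.1⟩
    have h := TwoChainCoverAux.main_lemma (TwoChainCoverAux.cflip C) del lam hg' b hb'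
    rw [TwoChainCoverAux.cflip_window, TwoChainCoverAux.cflip_rankA,
      TwoChainCoverAux.cflip_tUp, TwoChainCoverAux.cflip_walk,
      TwoChainCoverAux.cflip_walk] at h
    linarith
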